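/- arXiv:1712.04329 — 3 statements merged into one kernel-verified Lean document; each statement's English description precedes it below -/
import Mathlib

section
/- Let H be a complex Hilbert space and let P₁, P₂ : H → H be continuous linear operators that are symmetric. If f ∈ H satisfies equality in the uncertainty inequality, |⟪f, (P₁P₂ − P₂P₁) f⟫| = 2 ‖P₁ f‖ ‖P₂ f‖, and P₂ f ≠ 0, then there exists a real number λ such that P₁ f = i λ • (P₂ f); that is, minimizers of the uncertainty principle are exactly the coherent states. -/
open scoped ComplexInnerProductSpace

/-- Minimizers of the uncertainty principle are coherent states: if equality
`|⟪f, (P₁P₂ − P₂P₁) f⟫| = 2 ‖P₁ f‖ ‖P₂ f‖` holds and `P₂ f ≠ 0`, then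
`P₁ f = iλ • (P₂ f)` for some real `λ`. -/
theorem equality_implies_coherent_state
    {H : Type*} [NormedAddCommGroup H] [InnerProductSpace ℂ H] [CompleteSpace H]
    (P₁ P₂ : H →L[ℂ] H)
    (h₁ : ∀ f g : H, ⟪P₁ f, g⟫ = ⟪f, P₁ g⟫)
    (h₂ : ∀ f g : H, ⟪P₂ f, g⟫ = ⟪f, P₂ g⟫)
    (f : H)
    (heq : ‖⟪f, (P₁.comp P₂ - P₂.comp P₁) f⟫‖ = 2 * ‖P₁ f‖ * ‖P₂ f‖)
    (hne : P₂ f ≠ 0) :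
    ∃ lam : ℝ, P₁ f = (Complex.I * (lam : ℂ)) • (P₂ f) := by
  by_cases h0 : P₁ f = 0
  · exact ⟨0, by simp [h0]⟩
  set z : ℂ := ⟪P₁ f, P₂ f⟫ with hz
  have key : ⟪f, (P₁.comp P₂ - P₂.comp P₁) f⟫ = z - (starRingEnd ℂ) z := by
    rw [ContinuousLinearMap.sub_apply, ContinuousLinearMap.comp_apply,
      ContinuousLinearMap.comp_apply, inner_sub_right, ← h₁ f (P₂ f), ← h₂ f (P₁ f),
      inner_conj_symm]
  have himz : ‖⟪f, (P₁.comp P₂ - P₂.comp P₁) f⟫‖ = 2 * |z.im| := by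
    rw [key]
    have : z - (starRingEnd ℂ) z = (2 * z.im : ℝ) * Complex.I := by
      simp [Complex.ext_iff, Complex.sub_im, Complex.conj_im]; ring
    rw [this]
    simp [abs_mul]
  -- from heq: |z.im| = ‖P₁ f‖ * ‖P₂ f‖
  have him : |z.im| = ‖P₁ f‖ * ‖P₂ f‖ := by
    have := heq; rw [himz] at this; linarith
  -- Cauchy-Schwarz: |z| ≤ ‖P₁f‖‖P₂f‖, and |z.im| ≤ |z|
  have habs : ‖z‖ = ‖P₁ f‖ * ‖P₂ f‖ := by
    have h1 : |z.im| ≤ ‖z‖ := Complex.abs_im_le_norm z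
    have h2 : ‖z‖ ≤ ‖P₁ f‖ * ‖P₂ f‖ := norm_inner_le_norm _ _
    have : ‖z‖ = ‖z‖ := rfl
    rw [this]; linarith [him ▸ h1]
  have hre : z.re = 0 := by
    have h1 : (‖z‖) ^ 2 = z.re ^ 2 + z.im ^ 2 := Complex.sq_norm z ▸ by
      simp [Complex.normSq_apply, sq]
    have h2 : (‖z‖) ^ 2 = z.im ^ 2 := by
      rw [habs, ← him, sq_abs]
    nlinarith [sq_nonneg z.re]
  -- Cauchy-Schwarz equality case
  obtain ⟨r, hr0, hr⟩ := (norm_inner_eq_norm_iff (𝕜 := ℂ) h0 hne).1 habs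
  have hzr : z = r * ((‖P₁ f‖ ^ 2 : ℝ) : ℂ) := by
    rw [hz, hr, inner_smul_right, inner_self_eq_norm_sq_to_K]
    norm_cast
  have hrre : r.re = 0 := by
    have h3 : r.re * ‖P₁ f‖ ^ 2 = 0 := by
      rw [← hre, hzr]; simp [Complex.mul_re, ← Complex.ofReal_pow]
    rcases mul_eq_zero.1 h3 with h | h
    · exact h
    · exact absurd h (pow_ne_zero 2 (norm_ne_zero_iff.2 h0))
  have hri : r = Complex.I * (r.im : ℂ) := by
    rw [Complex.ext_iff]
    constructor <;> simp [Complex.mul_re, Complex.mul_im, hrre]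
  have hrim : r.im ≠ 0 := by
    intro h; apply hr0; rw [hri, h]; simp
  refine ⟨-1 / r.im, ?_⟩
  rw [hr, smul_smul]
  have him' : (r.im : ℂ) ≠ 0 := Complex.ofReal_ne_zero.2 hrim
  have : Complex.I * ((-1 / r.im : ℝ) : ℂ) * r = 1 := by
    rw [hri]
    push_cast
    field_simp
    ring_nf
    simp [Complex.I_sq]
    exact mul_inv_cancel₀ him'
  rw [this, one_smul]
end

section
/- On ℝ⁴ with coordinates (x,y,θ,σ), the vector fields X₁(x,y,θ,σ) = e^σ(cos θ, sin θ, 0, 0), X₂ = (0,0,1,0), X₄ = (0,0,0,1) together with the Lie bracket [X₁,X₂] satisfy Hörmander's condition: at every point p ∈ ℝ⁴, the real linear span of the four vectors X₁(p), X₂(p), X₄(p), and [X₁,X₂](p) is all of ℝ⁴. -/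
/-- The Lie bracket of two vector fields on ℝ⁴:
`[V,W](p) = DW(p)·V(p) − DV(p)·W(p)`. -/
noncomputable def lieBracket (V W : (Fin 4 → ℝ) → (Fin 4 → ℝ)) :
    (Fin 4 → ℝ) → (Fin 4 → ℝ) :=
  fun p => fderiv ℝ W p (V p) - fderiv ℝ V p (W p)

/-- `X₁(x,y,θ,σ) = e^σ (cos θ, sin θ, 0, 0)`, coordinates `(x,y,θ,σ) = (p 0, p 1, p 2, p 3)`. -/
noncomputable def X₁ : (Fin 4 → ℝ) → (Fin 4 → ℝ) :=
  fun p => ![Real.exp (p 3) * Real.cos (p 2), Real.exp (p 3) * Real.sin (p 2), 0, 0]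

/-- `X₂ = ∂_θ`. -/
noncomputable def X₂ : (Fin 4 → ℝ) → (Fin 4 → ℝ) :=
  fun _ => ![0, 0, 1, 0]

/-- `X₄ = ∂_σ`. -/
noncomputable def X₄ : (Fin 4 → ℝ) → (Fin 4 → ℝ) :=
  fun _ => ![0, 0, 0, 1]

open ContinuousLinearMap in
noncomputable def L₁ (p : Fin 4 → ℝ) : (Fin 4 → ℝ) →L[ℝ] (Fin 4 → ℝ) :=
  ContinuousLinearMap.pi
    ![-(Real.exp (p 3) • Real.sin (p 2) • proj 2) + Real.cos (p 2) • Real.exp (p 3) • proj 3,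
      Real.exp (p 3) • Real.cos (p 2) • proj 2 + Real.sin (p 2) • Real.exp (p 3) • proj 3,
      0, 0]

open ContinuousLinearMap in
lemma hasFDerivX₁ (p : Fin 4 → ℝ) : HasFDerivAt X₁ (L₁ p) p := by
  rw [hasFDerivAt_pi']
  intro i
  have h3 : HasFDerivAt (fun q : Fin 4 → ℝ => q 3) (proj 3 : (Fin 4 → ℝ) →L[ℝ] ℝ) p :=
    (proj 3 : (Fin 4 → ℝ) →L[ℝ] ℝ).hasFDerivAt
  have h2 : HasFDerivAt (fun q : Fin 4 → ℝ => q 2) (proj 2 : (Fin 4 → ℝ) →L[ℝ] ℝ) p :=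
    (proj 2 : (Fin 4 → ℝ) →L[ℝ] ℝ).hasFDerivAt
  fin_cases i
  · exact (h3.exp.mul h2.cos).congr_fderiv (by
      simp [L₁, ContinuousLinearMap.proj_pi]
      ext x; simp)
  · exact (h3.exp.mul h2.sin).congr_fderiv (by simp [L₁, ContinuousLinearMap.proj_pi, smul_neg])
  · simpa [X₁, L₁, ContinuousLinearMap.proj_pi] using hasFDerivAt_const (0:ℝ) p
  · simpa [X₁, L₁, ContinuousLinearMap.proj_pi] using hasFDerivAt_const (0:ℝ) p

lemma bracket_eq (p : Fin 4 → ℝ) :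
    lieBracket X₁ X₂ p =
      ![Real.exp (p 3) * Real.sin (p 2), -(Real.exp (p 3) * Real.cos (p 2)), 0, 0] := by
  have h1 : fderiv ℝ X₁ p = L₁ p := (hasFDerivX₁ p).fderiv
  have h2 : fderiv ℝ X₂ p = 0 := fderiv_const_apply _
  funext i
  fin_cases i <;>
    simp [lieBracket, h1, h2, L₁, X₂, ContinuousLinearMap.pi_apply]


/-- **Hörmander condition**: at every point `p`, the vectors
`X₁(p), X₂(p), X₄(p), [X₁,X₂](p)` span all of ℝ⁴. -/
theorem hormander_condition (p : Fin 4 → ℝ) :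
    Submodule.span ℝ {X₁ p, X₂ p, X₄ p, lieBracket X₁ X₂ p} = ⊤ := by
  set E := Real.exp (p 3) with hE
  have hEpos : 0 < E := Real.exp_pos _
  have hEne : E ≠ 0 := ne_of_gt hEpos
  rw [eq_top_iff]
  rintro v -
  set S : Set (Fin 4 → ℝ) := {X₁ p, X₂ p, X₄ p, lieBracket X₁ X₂ p} with hS
  have ha : X₁ p ∈ Submodule.span ℝ S := Submodule.subset_span (by simp [hS])
  have hb : X₂ p ∈ Submodule.span ℝ S := Submodule.subset_span (by simp [hS])
  have hc : X₄ p ∈ Submodule.span ℝ S := Submodule.subset_span (by simp [hS])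
  have hd : lieBracket X₁ X₂ p ∈ Submodule.span ℝ S := Submodule.subset_span (by simp [hS])
  have he0 : (fun i => if i = 0 then (1:ℝ) else 0) ∈ Submodule.span ℝ S := by
    have h := Submodule.add_mem _ (Submodule.smul_mem _ (Real.cos (p 2) / E) ha)
      (Submodule.smul_mem _ (Real.sin (p 2) / E) hd)
    convert h using 1
    funext i
    fin_cases i <;> simp [X₁, bracket_eq, ← hE] <;> field_simp <;>
      nlinarith [Real.sin_sq_add_cos_sq (p 2)]
  have he1 : (fun i => if i = 1 then (1:ℝ) else 0) ∈ Submodule.span ℝ S := by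
    have h := Submodule.add_mem _ (Submodule.smul_mem _ (Real.sin (p 2) / E) ha)
      (Submodule.smul_mem _ (-(Real.cos (p 2) / E)) hd)
    convert h using 1
    funext i
    fin_cases i <;> simp [X₁, bracket_eq, ← hE] <;> field_simp <;>
      nlinarith [Real.sin_sq_add_cos_sq (p 2)]
  have he2 : (fun i => if i = 2 then (1:ℝ) else 0) ∈ Submodule.span ℝ S := by
    convert hb using 1
    funext i; fin_cases i <;> simp [X₂]
  have he3 : (fun i => if i = 3 then (1:ℝ) else 0) ∈ Submodule.span ℝ S := by
    convert hc using 1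
    funext i; fin_cases i <;> simp [X₄]
  have hv : v = v 0 • (fun i => if i = 0 then (1:ℝ) else 0)
      + v 1 • (fun i => if i = 1 then (1:ℝ) else 0)
      + v 2 • (fun i => if i = 2 then (1:ℝ) else 0)
      + v 3 • (fun i => if i = 3 then (1:ℝ) else 0) := by
    funext i; fin_cases i <;> simp
  rw [hv]
  exact Submodule.add_mem _ (Submodule.add_mem _ (Submodule.add_mem _
    (Submodule.smul_mem _ _ he0) (Submodule.smul_mem _ _ he1))
    (Submodule.smul_mem _ _ he2)) (Submodule.smul_mem _ _ he3)
end

section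
/- Let Ψ₀ : ℝ² → ℂ be the Gabor mother function Ψ₀(ξ,η) = e^{−(ξ²+η²)} e^{2iη}. Then Ψ₀ satisfies the coherent-state (minimal uncertainty) equation Y₁Ψ₀ = i λ Y₂Ψ₀ with λ = −1; that is, for every (ξ,η) ∈ ℝ², ∂_ξ Ψ₀(ξ,η) = −i · (η ∂_ξ Ψ₀(ξ,η) − ξ ∂_η Ψ₀(ξ,η)). -/
noncomputable def Ψ₀ (ξ η : ℝ) : ℂ :=
  Complex.exp (-((ξ : ℂ)^2 + (η : ℂ)^2)) * Complex.exp (2 * (η : ℂ) * Complex.I)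

lemma hderiv1 (ξ η : ℝ) :
    HasDerivAt (fun t : ℝ => Ψ₀ t η) ((-2 * ξ) * Ψ₀ ξ η) ξ := by
  have hre : HasDerivAt (fun t : ℝ => (t : ℂ)) 1 ξ := Complex.ofRealCLM.hasDerivAt
  have hinner : HasDerivAt (fun t : ℝ => -((t : ℂ)^2 + (η : ℂ)^2)) (-(2 * ξ)) ξ := by
    have := ((hre.mul hre).add_const ((η : ℂ)^2)).neg
    convert this using 1
    · rfl
    · funext x; simp only [Pi.neg_apply, Pi.mul_apply]; ring
    · ring
  have := (hinner.cexp).mul_const (Complex.exp (2 * (η : ℂ) * Complex.I))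
  simp only [Ψ₀]
  convert this using 1
  · rfl
  ring

lemma hderiv2 (ξ η : ℝ) :
    HasDerivAt (fun t : ℝ => Ψ₀ ξ t) ((-2 * η + 2 * Complex.I) * Ψ₀ ξ η) η := by
  have hre : HasDerivAt (fun t : ℝ => (t : ℂ)) 1 η := Complex.ofRealCLM.hasDerivAt
  have hinner : HasDerivAt (fun t : ℝ => -((ξ : ℂ)^2 + (t : ℂ)^2)) (-(2 * η)) η := by
    have := ((hre.mul hre).const_add ((ξ : ℂ)^2)).neg
    convert this using 1
    · rfl
    · funext x; simp only [Pi.neg_apply, Pi.mul_apply]; ring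
    · ring
  have hinner2 : HasDerivAt (fun t : ℝ => 2 * (t : ℂ) * Complex.I) (2 * Complex.I) η := by
    have := (hre.const_mul (2 : ℂ)).mul_const Complex.I
    convert this using 1
    · rfl
    ring
  have := hinner.cexp.mul hinner2.cexp
  simp only [Ψ₀]
  convert this using 1
  · rfl
  · funext x; simp only [Pi.mul_apply]
  ring

/-- The Gabor mother function satisfies the coherent-state (minimal uncertainty) equation
`Y₁ Ψ₀ = iλ Y₂ Ψ₀` with `λ = −1`:
`∂_ξ Ψ₀ = −i (η ∂_ξ Ψ₀ − ξ ∂_η Ψ₀)`. -/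
theorem Ψ₀_coherent_state (ξ η : ℝ) :
    deriv (fun t : ℝ => Ψ₀ t η) ξ
      = -Complex.I *
        ((η : ℂ) * deriv (fun t : ℝ => Ψ₀ t η) ξ - (ξ : ℂ) * deriv (fun t : ℝ => Ψ₀ ξ t) η) := by
  rw [(hderiv1 ξ η).deriv, (hderiv2 ξ η).deriv]
  have h2 : Complex.I * Complex.I = -1 := Complex.I_mul_I
  ring_nf
  rw [Complex.I_sq]
  ring
end
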